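/- arXiv:0710.0436 — 7 statements merged into one kernel-verified Lean document; each statement's English description precedes it below -/
import Mathlib

section
/- Let m, n ≥ 1, let a be an n×m real matrix with a_{ij} ≥ 0 such that for each column j there exists a row i with a_{ij} > 0, and let r > 0. If a pair (u, v) with u_i ≥ 0, v_i ≥ 0 for all i, ∑_{i=1}^n u_i² = r and ∑_{i=1}^n v_i² = r maximizes l̄(u,v) = ∏_{j=1}^m ∑_{i=1}^n u_i v_i a_{ij} over all such pairs, then u_i = v_i for every i. (Theorem 1) -/
open Finset

/-- Auxiliary: if row `k` of `a` is zero and `(u, v)` is a maximizer (in `u`),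
then `u k = 0`. -/
lemma aux_zero_row (n m : ℕ) (hm : 1 ≤ m)
    (a : Fin n → Fin m → ℝ) (r : ℝ) (hr : 0 < r)
    (u v : Fin n → ℝ) (hu : ∀ i, 0 ≤ u i)
    (hus : ∑ i, (u i) ^ 2 = r)
    (k : Fin n) (hk : ∀ j, a k j = 0)
    (hFpos : ∀ j, 0 < ∑ i, u i * v i * a i j)
    (hmaxu : ∀ u' : Fin n → ℝ, (∀ i, 0 ≤ u' i) → (∑ i, (u' i) ^ 2 = r) →
      (∏ j, ∑ i, u' i * v i * a i j) ≤ ∏ j, ∑ i, u i * v i * a i j) :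
    u k = 0 := by
  by_contra h0
  have huk : 0 < u k := lt_of_le_of_ne (hu k) (Ne.symm h0)
  set s := r - u k ^ 2 with hs_def
  have hks : u k ^ 2 ≤ r := by
    rw [← hus]
    exact Finset.single_le_sum (fun i _ => sq_nonneg (u i)) (mem_univ k)
  have hs0 : 0 ≤ s := by simp [hs_def]; linarith
  have hs : 0 < s := by
    rcases lt_or_eq_of_le hs0 with h | h
    · exact h
    · exfalso
      -- all other coordinates of u are zero
      have hsum0 : ∑ i ∈ univ.erase k, u i ^ 2 = 0 := by
        have hadd : u k ^ 2 + ∑ i ∈ univ.erase k, u i ^ 2 = r := by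
          rw [← hus]; exact Finset.add_sum_erase univ (fun i => u i ^ 2) (mem_univ k)
        have hs' : r - u k ^ 2 = 0 := by rw [← hs_def, ← h]
        linarith
      have hzero : ∀ i ∈ univ.erase k, u i ^ 2 = 0 :=
        (Finset.sum_eq_zero_iff_of_nonneg (fun i _ => sq_nonneg (u i))).1 hsum0
      have hF : ∑ i, u i * v i * a i ⟨0, hm⟩ = 0 := by
        apply Finset.sum_eq_zero
        intro i _
        by_cases hik : i = k
        · rw [hik, hk]; ring
        · have : u i = 0 := by
            have := hzero i (Finset.mem_erase.2 ⟨hik, mem_univ i⟩)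
            exact pow_eq_zero_iff (by norm_num) |>.1 this
          rw [this]; ring
      have := hFpos ⟨0, hm⟩
      rw [hF] at this
      exact lt_irrefl 0 this
  set c := Real.sqrt (r / s) with hc_def
  have hc2 : c ^ 2 = r / s := Real.sq_sqrt (le_of_lt (div_pos hr hs))
  have hc1 : 1 < c := by
    rw [hc_def]
    have h1 : (1 : ℝ) < r / s := (one_lt_div hs).2 (by nlinarith)
    nlinarith [Real.sq_sqrt (le_of_lt (div_pos hr hs)), Real.sqrt_nonneg (r / s)]
  set u' : Fin n → ℝ := fun i => if i = k then 0 else c * u i with hu'_def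
  have hu' : ∀ i, 0 ≤ u' i := by
    intro i; simp only [hu'_def]
    split
    · exact le_refl 0
    · exact mul_nonneg (by linarith) (hu i)
  have hsum' : ∑ i, (u' i) ^ 2 = r := by
    have heq : ∀ i, (u' i) ^ 2 = c ^ 2 * u i ^ 2 - (if i = k then c ^ 2 * u k ^ 2 else 0) := by
      intro i; simp only [hu'_def]
      by_cases hik : i = k
      · simp [hik]
      · simp [hik]; ring
    simp_rw [heq]
    rw [Finset.sum_sub_distrib, ← Finset.mul_sum, hus, Finset.sum_ite_eq' univ k]
    simp only [mem_univ, if_true]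
    rw [hc2]
    field_simp
    ring
  have hfac : ∀ j, ∑ i, u' i * v i * a i j = c * ∑ i, u i * v i * a i j := by
    intro j
    rw [Finset.mul_sum]
    apply Finset.sum_congr rfl
    intro i _
    simp only [hu'_def]
    by_cases hik : i = k
    · simp [hik, hk j]
    · simp [hik]; ring
  have hL : 0 < ∏ j, ∑ i, u i * v i * a i j :=
    Finset.prod_pos (fun j _ => hFpos j)
  have hprod : ∏ j, ∑ i, u' i * v i * a i j
      = c ^ m * ∏ j, ∑ i, u i * v i * a i j := by
    simp_rw [hfac]
    rw [Finset.prod_mul_distrib, Finset.prod_const, card_univ, Fintype.card_fin]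
  have hcm : 1 < c ^ m := one_lt_pow₀ hc1 (by omega)
  have := hmaxu u' hu' hsum'
  rw [hprod] at this
  nlinarith

/-- Theorem 1: a maximizer (u, v) of the two-variable likelihood over the product
of spheres (with nonnegative coordinates) must satisfy u = v. -/
theorem stmt_0 (n m : ℕ) (hn : 1 ≤ n) (hm : 1 ≤ m)
    (a : Fin n → Fin m → ℝ) (ha : ∀ i j, 0 ≤ a i j)
    (hcol : ∀ j, ∃ i, 0 < a i j) (r : ℝ) (hr : 0 < r)
    (u v : Fin n → ℝ) (hu : ∀ i, 0 ≤ u i) (hv : ∀ i, 0 ≤ v i)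
    (hus : ∑ i, (u i) ^ 2 = r) (hvs : ∑ i, (v i) ^ 2 = r)
    (hmax : ∀ u' v' : Fin n → ℝ, (∀ i, 0 ≤ u' i) → (∀ i, 0 ≤ v' i) →
      (∑ i, (u' i) ^ 2 = r) → (∑ i, (v' i) ^ 2 = r) →
      (∏ j, ∑ i, u' i * v' i * a i j) ≤ ∏ j, ∑ i, u i * v i * a i j) :
    ∀ i, u i = v i := by
  -- The maximum value is positive: witness the uniform vector.
  have hn0 : (0 : ℝ) < (n : ℝ) := by exact_mod_cast hn
  set w0 : Fin n → ℝ := fun _ => Real.sqrt (r / n) with hw0_def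
  have hw0n : ∀ i, 0 ≤ w0 i := fun i => Real.sqrt_nonneg _
  have hw0sq : ∀ i : Fin n, w0 i ^ 2 = r / n := fun i =>
    Real.sq_sqrt (le_of_lt (div_pos hr hn0))
  have hw0s : ∑ i, (w0 i) ^ 2 = r := by
    have h1 : ∑ i, (w0 i) ^ 2 = ∑ _i : Fin n, r / n :=
      Finset.sum_congr rfl fun i _ => hw0sq i
    rw [h1, Finset.sum_const, card_univ, Fintype.card_fin, nsmul_eq_mul]
    field_simp
  have hw0fac : ∀ j, 0 < ∑ i, w0 i * w0 i * a i j := by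
    intro j
    have : ∀ i : Fin n, w0 i * w0 i * a i j = (r / n) * a i j := by
      intro i
      have h := hw0sq i
      rw [← h]; ring
    simp_rw [this]
    rw [← Finset.mul_sum]
    apply mul_pos (div_pos hr hn0)
    obtain ⟨i0, hi0⟩ := hcol j
    exact Finset.sum_pos' (fun i _ => ha i j) ⟨i0, mem_univ i0, hi0⟩
  have hL : 0 < ∏ j, ∑ i, u i * v i * a i j :=
    lt_of_lt_of_le (Finset.prod_pos (fun j _ => hw0fac j))
      (hmax w0 w0 hw0n hw0n hw0s hw0s)
  -- each factor is positive
  have hFpos : ∀ j, 0 < ∑ i, u i * v i * a i j := by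
    intro j
    rcases lt_or_eq_of_le (Finset.sum_nonneg (fun i _ =>
      mul_nonneg (mul_nonneg (hu i) (hv i)) (ha i j))) with h | h
    · exact h
    · exfalso
      have : ∏ j, ∑ i, u i * v i * a i j = 0 :=
        Finset.prod_eq_zero (mem_univ j) h.symm
      rw [this] at hL
      exact lt_irrefl 0 hL
  intro k
  by_cases hk : ∃ j, 0 < a k j
  · -- nondegenerate row: use the averaged vector w
    by_contra hne
    obtain ⟨j0, hj0⟩ := hk
    set w : Fin n → ℝ := fun i => Real.sqrt ((u i ^ 2 + v i ^ 2) / 2) with hw_def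
    have hwn : ∀ i, 0 ≤ w i := fun i => Real.sqrt_nonneg _
    have hw2 : ∀ i, w i ^ 2 = (u i ^ 2 + v i ^ 2) / 2 := fun i =>
      Real.sq_sqrt (by positivity)
    have hws : ∑ i, (w i) ^ 2 = r := by
      simp_rw [hw2]
      rw [← Finset.sum_div, Finset.sum_add_distrib, hus, hvs]
      ring
    have hle : ∀ i, u i * v i ≤ w i * w i := by
      intro i
      have := hw2 i
      nlinarith [sq_nonneg (u i - v i)]
    have hlt : u k * v k < w k * w k := by
      have hsub : u k - v k ≠ 0 := sub_ne_zero.2 hne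
      have h1 : 0 < (u k - v k) ^ 2 :=
        lt_of_le_of_ne (sq_nonneg _) (Ne.symm (pow_ne_zero 2 hsub))
      nlinarith [hw2 k]
    have hstrict : ∑ i, u i * v i * a i j0 < ∑ i, w i * w i * a i j0 :=
      Finset.sum_lt_sum (fun i _ => mul_le_mul_of_nonneg_right (hle i) (ha i j0))
        ⟨k, mem_univ k, mul_lt_mul_of_pos_right hlt hj0⟩
    have hallle : ∀ j ∈ univ, ∑ i, u i * v i * a i j ≤ ∑ i, w i * w i * a i j :=
      fun j _ => Finset.sum_le_sum (fun i _ => mul_le_mul_of_nonneg_right (hle i) (ha i j))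
    have hp : (∏ j, ∑ i, u i * v i * a i j) < ∏ j, ∑ i, w i * w i * a i j :=
      Finset.prod_lt_prod (fun j _ => hFpos j) hallle ⟨j0, mem_univ j0, hstrict⟩
    exact absurd (hmax w w hwn hwn hws hws) (not_le.2 hp)
  · push_neg at hk
    have hk0 : ∀ j, a k j = 0 := fun j => le_antisymm (hk j) (ha k j)
    have huk : u k = 0 := by
      apply aux_zero_row n m hm a r hr u v hu hus k hk0 hFpos
      intro u' hu' hsum'
      exact hmax u' v hu' hv hsum' hvs
    have hvk : v k = 0 := by
      have hFpos' : ∀ j, 0 < ∑ i, v i * u i * a i j := by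
        intro j
        have : ∑ i, v i * u i * a i j = ∑ i, u i * v i * a i j := by
          apply Finset.sum_congr rfl; intro i _; ring
        rw [this]; exact hFpos j
      apply aux_zero_row n m hm a r hr v u hv hvs k hk0 hFpos'
      intro v' hv' hsum'
      have h1 : ∏ j, ∑ i, v' i * u i * a i j = ∏ j, ∑ i, u i * v' i * a i j := by
        apply Finset.prod_congr rfl; intro j _
        apply Finset.sum_congr rfl; intro i _; ring
      have h2 : ∏ j, ∑ i, v i * u i * a i j = ∏ j, ∑ i, u i * v i * a i j := by
        apply Finset.prod_congr rfl; intro j _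
        apply Finset.sum_congr rfl; intro i _; ring
      rw [h1, h2]
      exact hmax u v' hu hv' hus hsum'
    rw [huk, hvk]
end

section
/- Let a be an n×m real matrix with a_{ij} ≥ 0 and let r > 0. For every pair (u,v) with u_i ≥ 0, v_i ≥ 0, ∑_{i=1}^n u_i² = r and ∑_{i=1}^n v_i² = r, there exists c ∈ ℝⁿ with ∑_{i=1}^n c_i² = r such that ∏_{j=1}^m ∑_{i=1}^n c_i² a_{ij} ≥ ∏_{j=1}^m ∑_{i=1}^n u_i v_i a_{ij}. Consequently the maximum of the one-variable likelihood l over the sphere equals the maximum of the two-variable likelihood l̄ over the product of spheres. -/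
/-- For every feasible pair (u,v) there is a point c on the sphere whose one-variable
likelihood is at least the two-variable likelihood of (u,v); consequently the maximum
of the one-variable likelihood over the sphere equals the maximum of the two-variable
likelihood over the product of spheres. -/
theorem stmt_1 (n m : ℕ) (a : Fin n → Fin m → ℝ) (ha : ∀ i j, 0 ≤ a i j)
    (r : ℝ) (hr : 0 < r) :
    (∀ u v : Fin n → ℝ, (∀ i, 0 ≤ u i) → (∀ i, 0 ≤ v i) →
      (∑ i, (u i) ^ 2 = r) → (∑ i, (v i) ^ 2 = r) →
      ∃ c : Fin n → ℝ, (∑ i, (c i) ^ 2 = r) ∧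
        (∏ j, ∑ i, u i * v i * a i j) ≤ ∏ j, ∑ i, (c i) ^ 2 * a i j) ∧
    sSup {x : ℝ | ∃ c : Fin n → ℝ, (∑ i, (c i) ^ 2 = r) ∧
        x = ∏ j, ∑ i, (c i) ^ 2 * a i j} =
      sSup {x : ℝ | ∃ u v : Fin n → ℝ, (∀ i, 0 ≤ u i) ∧ (∀ i, 0 ≤ v i) ∧
        (∑ i, (u i) ^ 2 = r) ∧ (∑ i, (v i) ^ 2 = r) ∧
        x = ∏ j, ∑ i, u i * v i * a i j} := by
  have key : ∀ u v : Fin n → ℝ, (∀ i, 0 ≤ u i) → (∀ i, 0 ≤ v i) →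
      (∑ i, (u i) ^ 2 = r) → (∑ i, (v i) ^ 2 = r) →
      ∃ c : Fin n → ℝ, (∑ i, (c i) ^ 2 = r) ∧
        (∏ j, ∑ i, u i * v i * a i j) ≤ ∏ j, ∑ i, (c i) ^ 2 * a i j := by
    intro u v hu hv hsu hsv
    refine ⟨fun i => Real.sqrt (((u i) ^ 2 + (v i) ^ 2) / 2), ?_, ?_⟩
    · have : ∀ i, (Real.sqrt (((u i) ^ 2 + (v i) ^ 2) / 2)) ^ 2
          = ((u i) ^ 2 + (v i) ^ 2) / 2 := by
        intro i
        exact Real.sq_sqrt (by positivity)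
      simp only [this]
      rw [← Finset.sum_div, Finset.sum_add_distrib, hsu, hsv]
      ring
    · apply Finset.prod_le_prod
      · intro j _
        exact Finset.sum_nonneg fun i _ =>
          mul_nonneg (mul_nonneg (hu i) (hv i)) (ha i j)
      · intro j _
        apply Finset.sum_le_sum
        intro i _
        apply mul_le_mul_of_nonneg_right _ (ha i j)
        rw [Real.sq_sqrt (by positivity)]
        nlinarith [sq_nonneg (u i - v i)]
  refine ⟨key, ?_⟩
  set A := {x : ℝ | ∃ c : Fin n → ℝ, (∑ i, (c i) ^ 2 = r) ∧
      x = ∏ j, ∑ i, (c i) ^ 2 * a i j} with hA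
  set B := {x : ℝ | ∃ u v : Fin n → ℝ, (∀ i, 0 ≤ u i) ∧ (∀ i, 0 ≤ v i) ∧
      (∑ i, (u i) ^ 2 = r) ∧ (∑ i, (v i) ^ 2 = r) ∧
      x = ∏ j, ∑ i, u i * v i * a i j} with hB
  have hAB : A ⊆ B := by
    rintro x ⟨c, hc, rfl⟩
    refine ⟨fun i => |c i|, fun i => |c i|, fun i => abs_nonneg _, fun i => abs_nonneg _,
      by simpa [sq_abs] using hc, by simpa [sq_abs] using hc, ?_⟩
    congr 1 with j
    congr 1 with i
    rw [← abs_mul, abs_mul_self, ← sq]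
  have hBbdd : BddAbove B := by
    refine ⟨∏ j, ∑ i, r * a i j, ?_⟩
    rintro x ⟨u, v, hu, hv, hsu, hsv, rfl⟩
    apply Finset.prod_le_prod
    · intro j _
      exact Finset.sum_nonneg fun i _ =>
        mul_nonneg (mul_nonneg (hu i) (hv i)) (ha i j)
    · intro j _
      apply Finset.sum_le_sum
      intro i _
      apply mul_le_mul_of_nonneg_right _ (ha i j)
      have h1 : (u i) ^ 2 ≤ r := hsu ▸ Finset.single_le_sum
        (fun i _ => sq_nonneg (u i)) (Finset.mem_univ i)
      have h2 : (v i) ^ 2 ≤ r := hsv ▸ Finset.single_le_sum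
        (fun i _ => sq_nonneg (v i)) (Finset.mem_univ i)
      nlinarith [sq_nonneg (u i - v i)]
  rcases Nat.eq_zero_or_pos n with hn | hn
  · have hAe : A = ∅ := by
      subst hn
      ext x
      simp only [hA, Set.mem_setOf_eq, Set.mem_empty_iff_false, iff_false]
      rintro ⟨c, hc, -⟩
      simp at hc
      linarith
    have hBe : B = ∅ := by
      subst hn
      ext x
      simp only [hB, Set.mem_setOf_eq, Set.mem_empty_iff_false, iff_false]
      rintro ⟨u, v, -, -, hc, -⟩
      simp at hc
      linarith
    rw [hAe, hBe]
  · have hAne : A.Nonempty := by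
      refine ⟨_, fun _ => Real.sqrt (r / n), ?_, rfl⟩
      have : (Real.sqrt (r / n)) ^ 2 = r / n :=
        Real.sq_sqrt (by positivity)
      simp [this]
      field_simp
      rw [Real.sq_sqrt hr.le, Real.sq_sqrt (Nat.cast_nonneg _)]
    apply le_antisymm
    · exact csSup_le_csSup hBbdd hAne hAB
    · apply csSup_le (hAne.mono hAB)
      rintro x ⟨u, v, hu, hv, hsu, hsv, rfl⟩
      obtain ⟨c, hc, hle⟩ := key u v hu hv hsu hsv
      exact le_trans hle (le_csSup (hBbdd.mono hAB) ⟨c, hc, rfl⟩)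
end

section
/- Let a be an n×m real matrix, r > 0, c ∈ ℝⁿ with ∑_{k=1}^n c_k² = r, set l_j = ∑_{i=1}^n c_i² a_{ij} and l = ∏_{j=1}^m l_j, and assume l_j ≠ 0 for every j. If λ ∈ ℝ satisfies l·∑_{j=1}^m a_{kj} c_k / l_j − λ c_k = 0 for every k, then for each k either c_k = 0 or ∑_{j=1}^m a_{kj} r/(m l_j) = 1. -/
/-- From the Lagrange stationarity equations: for each k, either c_k = 0 or
∑_j a_{kj} r/(m l_j) = 1. -/
theorem stmt_3 (n m : ℕ) (hm : 1 ≤ m) (a : Fin n → Fin m → ℝ) (r : ℝ) (hr : 0 < r)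
    (c : Fin n → ℝ) (hc : ∑ k, (c k) ^ 2 = r)
    (hl : ∀ j, (∑ i, (c i) ^ 2 * a i j) ≠ 0) (lam : ℝ)
    (hstat : ∀ k, (∏ j, ∑ i, (c i) ^ 2 * a i j) *
        (∑ j, a k j * c k / (∑ i, (c i) ^ 2 * a i j)) - lam * c k = 0) :
    ∀ k, c k = 0 ∨ (∑ j, a k j * r / ((m : ℝ) * (∑ i, (c i) ^ 2 * a i j))) = 1 := by
  set L : Fin m → ℝ := fun j => ∑ i, (c i) ^ 2 * a i j with hLdef
  set l : ℝ := ∏ j, L j with hldef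
  have hlne : l ≠ 0 := Finset.prod_ne_zero_iff.mpr fun j _ => hl j
  have hmne : (m : ℝ) ≠ 0 := by positivity
  -- key: multiply stationarity by c k and sum
  have key : ∀ k, l * (∑ j, a k j * c k / L j) = lam * c k := fun k => by
    have := hstat k; linarith
  have hsum : ∑ k, c k * (l * (∑ j, a k j * c k / L j)) = lam * r := by
    rw [show lam * r = ∑ k, c k * (lam * c k) by
      rw [← hc, Finset.mul_sum]; congr 1; ext k; ring]
    exact Finset.sum_congr rfl fun k _ => by rw [key k]
  have hswap : ∑ k, c k * (l * (∑ j, a k j * c k / L j)) = l * (m : ℝ) := by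
    have e1 : ∑ k, c k * (l * (∑ j, a k j * c k / L j))
        = ∑ j, ∑ k, l * ((c k) ^ 2 * a k j / L j) := by
      simp only [Finset.mul_sum]
      rw [Finset.sum_comm]
      exact Finset.sum_congr rfl fun j _ => Finset.sum_congr rfl fun k _ => by ring
    rw [e1]
    have e2 : ∀ j, ∑ k, l * ((c k) ^ 2 * a k j / L j) = l := fun j => by
      rw [← Finset.mul_sum, ← Finset.sum_div, div_self (hl j), mul_one]
    rw [Finset.sum_congr rfl fun j _ => e2 j]
    simp [mul_comm]
  have hlam : lam * r = l * (m : ℝ) := by rw [← hsum, hswap]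
  intro k
  by_cases hck : c k = 0
  · exact Or.inl hck
  · right
    have h1 : l * (∑ j, a k j / L j) = lam := by
      have := key k
      have h2 : l * (c k * ∑ j, a k j / L j) = lam * c k := by
        rw [← this]; congr 1; rw [Finset.mul_sum]
        exact Finset.sum_congr rfl fun j _ => by ring
      have := mul_right_cancel₀ hck (by linarith [h2] : (l * (∑ j, a k j / L j)) * c k = lam * c k)
      exact this
    have h3 : (∑ j, a k j / L j) = (m : ℝ) / r := by
      have h4 : l * ((∑ j, a k j / L j) * r) = l * (m : ℝ) := by
        rw [← mul_assoc, h1, hlam]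
      have h5 := mul_left_cancel₀ hlne h4
      field_simp at h5 ⊢
      linarith
    calc ∑ j, a k j * r / ((m : ℝ) * L j)
        = (r / m) * ∑ j, a k j / L j := by
          rw [Finset.mul_sum]; exact Finset.sum_congr rfl fun j _ => by
            field_simp
      _ = 1 := by rw [h3]; field_simp
end

section
/- Let e be a symmetric m×m real matrix with e_{ij} ≥ 0 for all i,j, e_{ii} > 0 for all i, and row sums ∑_{j=1}^m e_{ij} = 1 for every i. If β ∈ ℝ^m has β_i > 0 for all i and satisfies ∑_{j=1}^m e_{ij} β_i β_j = 1 for every i, then β_i = 1 for every i. (Core of Theorem 2) -/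
/-- Core of Theorem 2: for a symmetric nonnegative matrix e with positive diagonal
and row sums 1, the only positive solution β of ∑_j e_{ij} β_i β_j = 1 is β ≡ 1. -/
theorem stmt_7 (m : ℕ) (e : Fin m → Fin m → ℝ)
    (hsym : ∀ i j, e i j = e j i) (hnn : ∀ i j, 0 ≤ e i j)
    (hdiag : ∀ i, 0 < e i i) (hrow : ∀ i, ∑ j, e i j = 1)
    (β : Fin m → ℝ) (hβ : ∀ i, 0 < β i)
    (heq : ∀ i, ∑ j, e i j * β i * β j = 1) :
    ∀ i, β i = 1 := by
  intro k
  set z : Fin m → ℝ := fun j => max (β j) (β j)⁻¹ with hzdef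
  obtain ⟨i, -, hi⟩ := Finset.exists_max_image Finset.univ z ⟨k, Finset.mem_univ k⟩
  have hz1 : ∀ j, 1 ≤ z j := by
    intro j
    rcases le_total (β j) 1 with h | h
    · exact le_max_of_le_right (one_le_inv_iff₀.mpr ⟨hβ j, h⟩)
    · exact le_max_of_le_left h
  have hsumi : ∑ j, e i j * β j = (β i)⁻¹ := by
    have h1 : (β i) * ∑ j, e i j * β j = 1 := by
      rw [Finset.mul_sum]
      rw [← heq i]
      exact Finset.sum_congr rfl (fun j _ => by ring)
    exact eq_inv_of_mul_eq_one_right h1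
  have sq_one : ∀ (x : ℝ), 0 < x → x = x⁻¹ → x = 1 := by
    intro x hx hxx
    have hm : x * x = 1 := by
      nth_rewrite 2 [hxx]
      exact mul_inv_cancel₀ (ne_of_gt hx)
    have : (x - 1) * (x + 1) = 0 := by nlinarith
    rcases mul_eq_zero.mp this with h | h
    · linarith
    · linarith
  have hβi : β i = 1 := by
    rcases le_total (β i) 1 with hle | hge
    · -- z i = (β i)⁻¹
      have hzi : z i = (β i)⁻¹ := by
        simp only [hzdef]
        exact max_eq_right (le_trans hle (one_le_inv_iff₀.mpr ⟨hβ i, hle⟩))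
      have hterm : ∀ j ∈ Finset.univ, 0 ≤ e i j * (z i - β j) := by
        intro j _
        apply mul_nonneg (hnn i j)
        have : β j ≤ z j := le_max_left _ _
        linarith [hi j (Finset.mem_univ j)]
      have hsum0 : ∑ j, e i j * (z i - β j) = 0 := by
        have : ∑ j, e i j * (z i - β j) = z i * (∑ j, e i j) - ∑ j, e i j * β j := by
          rw [Finset.mul_sum, ← Finset.sum_sub_distrib]
          exact Finset.sum_congr rfl (fun j _ => by ring)
        rw [this, hrow i, hsumi, hzi]; ring
      have := (Finset.sum_eq_zero_iff_of_nonneg hterm).mp hsum0 i (Finset.mem_univ i)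
      have h2 : z i = β i := by
        rcases mul_eq_zero.mp this with h | h
        · exact absurd h (ne_of_gt (hdiag i))
        · linarith
      exact sq_one (β i) (hβ i) (by rw [← hzi]; exact h2.symm)
    · -- z i = β i
      have hzi : z i = β i := by
        simp only [hzdef]
        exact max_eq_left (le_trans (inv_le_one_of_one_le₀ hge) hge)
      have hterm : ∀ j ∈ Finset.univ, 0 ≤ e i j * (β j - (z i)⁻¹) := by
        intro j _
        apply mul_nonneg (hnn i j)
        have h1 : (β j)⁻¹ ≤ z j := le_max_right _ _
        have h2 : z j ≤ z i := hi j (Finset.mem_univ j)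
        have h3 : (z i)⁻¹ ≤ ((β j)⁻¹)⁻¹ :=
          inv_anti₀ (inv_pos.mpr (hβ j)) (le_trans h1 h2)
        rw [inv_inv] at h3
        linarith
      have hsum0 : ∑ j, e i j * (β j - (z i)⁻¹) = 0 := by
        have : ∑ j, e i j * (β j - (z i)⁻¹) = (∑ j, e i j * β j) - (z i)⁻¹ * (∑ j, e i j) := by
          rw [Finset.mul_sum, ← Finset.sum_sub_distrib]
          exact Finset.sum_congr rfl (fun j _ => by ring)
        rw [this, hrow i, hsumi, hzi]; ring
      have := (Finset.sum_eq_zero_iff_of_nonneg hterm).mp hsum0 i (Finset.mem_univ i)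
      have h2 : β i = (β i)⁻¹ := by
        rcases mul_eq_zero.mp this with h | h
        · exact absurd h (ne_of_gt (hdiag i))
        · rw [hzi] at h; linarith
      exact sq_one (β i) (hβ i) h2
  -- now z i = 1, so z k ≤ 1
  have hzi1 : z i = 1 := by
    simp only [hzdef, hβi]; norm_num
  have hk : z k ≤ 1 := hzi1 ▸ hi k (Finset.mem_univ k)
  have h1 : β k ≤ 1 := le_trans (le_max_left _ _) hk
  have h2 : (β k)⁻¹ ≤ 1 := le_trans (le_max_right _ _) hk
  have hm : β k * (β k)⁻¹ = 1 := mul_inv_cancel₀ (ne_of_gt (hβ k))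
  nlinarith [mul_le_mul_of_nonneg_left h2 (hβ k).le]
end

section
/- Let b_1, …, b_m be nonzero vectors in ℝⁿ with nonnegative components, r > 0, and D_{ij} = (r/m)(b_i · b_j). If α and α′ in ℝ^m both have strictly positive components and both satisfy ∑_{j=1}^m D_{kj} α_k α_j = 1 and ∑_{j=1}^m D_{kj} α′_k α′_j = 1 for every k = 1,…,m, then α = α′. (Theorem 2: the positive solution of the quadratic system is unique) -/
/-- Theorem 2: the positive solution of the quadratic system
∑_j D_{kj} α_k α_j = 1, with D_{ij} = (r/m)(b_i · b_j) for nonzero nonnegative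
vectors b_j, is unique. -/
theorem stmt_8 (m n : ℕ) (hm : 1 ≤ m) (b : Fin m → Fin n → ℝ)
    (hbne : ∀ j, b j ≠ 0) (hbnn : ∀ j i, 0 ≤ b j i) (r : ℝ) (hr : 0 < r)
    (α α' : Fin m → ℝ) (hα : ∀ k, 0 < α k) (hα' : ∀ k, 0 < α' k)
    (heq : ∀ k, ∑ j, (r / (m : ℝ) * ∑ t, b k t * b j t) * α k * α j = 1)
    (heq' : ∀ k, ∑ j, (r / (m : ℝ) * ∑ t, b k t * b j t) * α' k * α' j = 1) :
    α = α' := by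
  set c : ℝ := r / (m : ℝ) with hc
  have hm0 : (0:ℝ) < (m : ℝ) := by exact_mod_cast hm
  have hcpos : 0 < c := div_pos hr hm0
  set g : Fin m → ℝ := fun k => α k - α' k with hg
  -- (Dα)_k = (α k)⁻¹
  have hf : ∀ k, ∑ j, (c * ∑ t, b k t * b j t) * α j = (α k)⁻¹ := by
    intro k
    have h1 : α k * ∑ j, (c * ∑ t, b k t * b j t) * α j = 1 := by
      rw [Finset.mul_sum, ← heq k]
      exact Finset.sum_congr rfl fun j _ => by ring
    exact eq_inv_of_mul_eq_one_right h1
  have hf' : ∀ k, ∑ j, (c * ∑ t, b k t * b j t) * α' j = (α' k)⁻¹ := by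
    intro k
    have h1 : α' k * ∑ j, (c * ∑ t, b k t * b j t) * α' j = 1 := by
      rw [Finset.mul_sum, ← heq' k]
      exact Finset.sum_congr rfl fun j _ => by ring
    exact eq_inv_of_mul_eq_one_right h1
  have hSform : ∀ k, (α k)⁻¹ - (α' k)⁻¹ = ∑ j, (c * ∑ t, b k t * b j t) * g j := by
    intro k
    rw [← hf k, ← hf' k, ← Finset.sum_sub_distrib]
    exact Finset.sum_congr rfl fun j _ => by simp [hg]; ring
  -- key identity: the quadratic form is a sum of squares
  have key : ∑ k, g k * ((α k)⁻¹ - (α' k)⁻¹)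
      = c * ∑ t, (∑ k, g k * b k t) ^ 2 := by
    calc ∑ k, g k * ((α k)⁻¹ - (α' k)⁻¹)
        = ∑ k, ∑ j, ∑ t, c * ((g k * b k t) * (g j * b j t)) := by
          refine Finset.sum_congr rfl fun k _ => ?_
          rw [hSform k, Finset.mul_sum]
          refine Finset.sum_congr rfl fun j _ => ?_
          rw [show g k * ((c * ∑ t, b k t * b j t) * g j)
              = (g k * g j * c) * ∑ t, b k t * b j t by ring, Finset.mul_sum]
          exact Finset.sum_congr rfl fun t _ => by ring
      _ = ∑ k, ∑ t, ∑ j, c * ((g k * b k t) * (g j * b j t)) :=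
          Finset.sum_congr rfl fun k _ => Finset.sum_comm
      _ = ∑ t, ∑ k, ∑ j, c * ((g k * b k t) * (g j * b j t)) := Finset.sum_comm
      _ = c * ∑ t, (∑ k, g k * b k t) ^ 2 := by
          rw [Finset.mul_sum]
          refine Finset.sum_congr rfl fun t _ => ?_
          rw [sq, Finset.sum_mul_sum, Finset.mul_sum]
          exact Finset.sum_congr rfl fun k _ => by rw [Finset.mul_sum]
  have hnonneg : 0 ≤ ∑ k, g k * ((α k)⁻¹ - (α' k)⁻¹) := by
    rw [key]; positivity
  have hterm : ∀ k, g k * ((α k)⁻¹ - (α' k)⁻¹) = -((g k) ^ 2 / (α k * α' k)) := by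
    intro k
    have h1 := (hα k).ne'
    have h2 := (hα' k).ne'
    field_simp [hg]
    ring
  have hsum0 : ∑ k, (g k) ^ 2 / (α k * α' k) = 0 := by
    have hle : ∑ k, (g k) ^ 2 / (α k * α' k) ≤ 0 := by
      have : ∑ k, g k * ((α k)⁻¹ - (α' k)⁻¹)
          = -∑ k, (g k) ^ 2 / (α k * α' k) := by
        rw [← Finset.sum_neg_distrib]
        exact Finset.sum_congr rfl fun k _ => hterm k
      linarith [hnonneg, this]
    have hge : 0 ≤ ∑ k, (g k) ^ 2 / (α k * α' k) :=
      Finset.sum_nonneg fun k _ =>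
        div_nonneg (sq_nonneg _) (mul_pos (hα k) (hα' k)).le
    linarith
  funext k
  have hzk := (Finset.sum_eq_zero_iff_of_nonneg
    (fun k _ => div_nonneg (sq_nonneg _) (mul_pos (hα k) (hα' k)).le :
      ∀ k ∈ Finset.univ, 0 ≤ (g k) ^ 2 / (α k * α' k))).mp
    hsum0 k (Finset.mem_univ k)
  have hgk : g k = 0 := by
    have hprod : 0 < α k * α' k := mul_pos (hα k) (hα' k)
    have hsq : (g k) ^ 2 = 0 := by
      rcases div_eq_zero_iff.mp hzk with h | h
      · exact h
      · exact absurd h hprod.ne'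
    exact pow_eq_zero_iff (by norm_num) |>.mp hsq
  simpa [hg, sub_eq_zero] using hgk
end

section
/- Let b_1, …, b_m be nonzero vectors in ℝⁿ with nonnegative components and r > 0. If u and u′ in ℝⁿ satisfy u · b_j > 0 and u′ · b_j > 0 for every j, u = (r/m)·∑_{j=1}^m b_j/(u · b_j), and u′ = (r/m)·∑_{j=1}^m b_j/(u′ · b_j), then u = u′. (Theorem 3: the solution of the stationarity equations is unique, so the maximum found is the global maximum on the sphere ∑_i u_i² = r) -/
/-- Theorem 3: the solution of the stationarity (fixed-point) equations
u = (r/m)·∑_j b_j/(u·b_j) with all u·b_j > 0 is unique. -/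
theorem stmt_9 (m n : ℕ) (hm : 1 ≤ m) (b : Fin m → Fin n → ℝ)
    (hbne : ∀ j, b j ≠ 0) (hbnn : ∀ j i, 0 ≤ b j i) (r : ℝ) (hr : 0 < r)
    (u u' : Fin n → ℝ)
    (hub : ∀ j, 0 < ∑ t, u t * b j t) (hub' : ∀ j, 0 < ∑ t, u' t * b j t)
    (hfix : ∀ i, u i = (r / (m : ℝ)) * ∑ j, b j i / (∑ t, u t * b j t))
    (hfix' : ∀ i, u' i = (r / (m : ℝ)) * ∑ j, b j i / (∑ t, u' t * b j t)) :
    u = u' := by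
  have hm0 : (0:ℝ) < (m:ℝ) := by exact_mod_cast hm
  set S : Fin m → ℝ := fun j => ∑ t, u t * b j t with hS
  set S' : Fin m → ℝ := fun j => ∑ t, u' t * b j t with hS'
  have key : ∀ (v w : Fin n → ℝ) (T : Fin m → ℝ),
      (∀ i, w i = (r/(m:ℝ)) * ∑ j, b j i / T j) →
      ∑ i, v i * w i = (r/(m:ℝ)) * ∑ j, (∑ t, v t * b j t) / T j := by
    intro v w T hw
    calc ∑ i, v i * w i = ∑ i, ∑ j, (r/(m:ℝ)) * (v i * b j i / T j) := by
          refine Finset.sum_congr rfl fun i _ => ?_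
          rw [hw i, Finset.mul_sum, Finset.mul_sum]
          exact Finset.sum_congr rfl fun j _ => by ring
      _ = ∑ j, ∑ i, (r/(m:ℝ)) * (v i * b j i / T j) := Finset.sum_comm
      _ = (r/(m:ℝ)) * ∑ j, (∑ t, v t * b j t) / T j := by
          rw [Finset.mul_sum]
          refine Finset.sum_congr rfl fun j _ => ?_
          rw [Finset.sum_div, Finset.mul_sum]
  have huu : ∑ i, u i * u i = r := by
    rw [key u u S hfix]
    have : ∀ j : Fin m, S j / S j = 1 := fun j => div_self (hub j).ne'
    show (r/(m:ℝ)) * ∑ j, S j / S j = r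
    simp only [this, Finset.sum_const, Finset.card_univ, Fintype.card_fin, nsmul_eq_mul, mul_one]
    field_simp
  have huu' : ∑ i, u' i * u' i = r := by
    rw [key u' u' S' hfix']
    have : ∀ j : Fin m, S' j / S' j = 1 := fun j => div_self (hub' j).ne'
    show (r/(m:ℝ)) * ∑ j, S' j / S' j = r
    simp only [this, Finset.sum_const, Finset.card_univ, Fintype.card_fin, nsmul_eq_mul, mul_one]
    field_simp
  have h1 : ∑ i, u i * u' i = (r/(m:ℝ)) * ∑ j, S j / S' j := key u u' S' hfix'
  have h2 : ∑ i, u' i * u i = (r/(m:ℝ)) * ∑ j, S' j / S j := key u' u S hfix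
  have hcross : ∑ i, u i * u' i = ∑ i, u' i * u i :=
    Finset.sum_congr rfl fun i _ => mul_comm _ _
  -- pointwise AM-GM lower bound
  have hge : ∀ j : Fin m, (2:ℝ) ≤ S j / S' j + S' j / S j := by
    intro j
    have h1 := hub j; have h2 := hub' j
    rw [div_add_div _ _ h2.ne' h1.ne', le_div_iff₀ (by positivity)]
    nlinarith [sq_nonneg (S j - S' j)]
  -- Cauchy-Schwarz type upper bound
  have hupper : ∑ j, (S j / S' j + S' j / S j) ≤ 2 * m := by
    have hsum : (r/(m:ℝ)) * ∑ j, (S j / S' j + S' j / S j) = 2 * ∑ i, u i * u' i := by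
      rw [Finset.sum_add_distrib, mul_add, ← h1, ← h2, hcross]; ring
    have hcs : 2 * ∑ i, u i * u' i ≤ 2 * r := by
      have : ∑ i, 2 * (u i * u' i) ≤ ∑ i, (u i * u i + u' i * u' i) :=
        Finset.sum_le_sum fun i _ => by nlinarith [sq_nonneg (u i - u' i)]
      rw [Finset.sum_add_distrib, huu, huu'] at this
      rw [← Finset.mul_sum] at this
      linarith
    have : (r/(m:ℝ)) * ∑ j, (S j / S' j + S' j / S j) ≤ 2 * r := by rw [hsum]; exact hcs
    have hrm : 0 < r/(m:ℝ) := by positivity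
    calc ∑ j, (S j / S' j + S' j / S j)
        = ((r/(m:ℝ)) * ∑ j, (S j / S' j + S' j / S j)) / (r/(m:ℝ)) := by
          field_simp
      _ ≤ (2 * r) / (r/(m:ℝ)) := by gcongr
      _ = 2 * m := by field_simp
  have hlower : 2 * (m:ℝ) ≤ ∑ j, (S j / S' j + S' j / S j) := by
    calc 2 * (m:ℝ) = ∑ _j : Fin m, (2:ℝ) := by
          simp [Finset.sum_const, mul_comm]
      _ ≤ ∑ j, (S j / S' j + S' j / S j) := Finset.sum_le_sum fun j _ => hge j
  have heqsum : ∑ _j : Fin m, (2:ℝ) = ∑ j, (S j / S' j + S' j / S j) := by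
    have h2m : ∑ _j : Fin m, (2:ℝ) = 2 * m := by simp [mul_comm]
    linarith [hupper, hlower, h2m.le, h2m.ge]
  have heq : ∀ j : Fin m, S j / S' j + S' j / S j = 2 := by
    intro j
    have := (Finset.sum_eq_sum_iff_of_le (fun j _ => hge j)).mp heqsum j (Finset.mem_univ j)
    linarith [this]
  have hSS : ∀ j, S j = S' j := by
    intro j
    have h := heq j
    have h1 := hub j; have h2 := hub' j
    rw [div_add_div _ _ h2.ne' h1.ne', div_eq_iff (by positivity)] at h
    nlinarith [sq_nonneg (S j - S' j)]
  funext i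
  rw [hfix i, hfix' i]
  congr 1
  exact Finset.sum_congr rfl fun j _ => by rw [show (∑ t, u t * b j t) = S j from rfl, hSS j]
end

section
/- Let D be a symmetric m×m real matrix with D_{ij} ≥ 0 for all i,j and D_{ii} > 0 for all i, let α ∈ ℝ^m have α_i > 0 for all i, and fix an index k. Let α′ agree with α in all coordinates except the k-th, where α′_k > 0 satisfies D_{kk} α′_k² + (∑_{i≠k} D_{ik} α_i) α′_k − 1 = 0. Then E(α′) + |α′_k − α_k|·D_{kk}·α_k ≤ E(α), where E(γ) = ∑_{i=1}^m |∑_{j=1}^m D_{ij} γ_i γ_j − 1|. In particular each coordinate update of the iteration does not increase the total error E. (Core of Lemma 3) -/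
/-- Core of Lemma 3: a coordinate update of the iteration (replacing α_k by the
positive root of the k-th quadratic equation) decreases the total error E by at
least |α′_k − α_k|·D_{kk}·α_k. -/
theorem stmt_14 (m : ℕ) (D : Fin m → Fin m → ℝ)
    (hsym : ∀ i j, D i j = D j i) (hnn : ∀ i j, 0 ≤ D i j)
    (hdiag : ∀ i, 0 < D i i)
    (α : Fin m → ℝ) (hα : ∀ i, 0 < α i) (k : Fin m)
    (α' : Fin m → ℝ) (hagree : ∀ i, i ≠ k → α' i = α i) (hpos : 0 < α' k)
    (hroot : D k k * (α' k) ^ 2 +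
        (∑ i ∈ Finset.univ.erase k, D i k * α i) * α' k - 1 = 0) :
    (∑ i, |(∑ j, D i j * α' i * α' j) - 1|) + |α' k - α k| * D k k * α k ≤
      ∑ i, |(∑ j, D i j * α i * α j) - 1| := by
  have hsum_erase : ∀ f : Fin m → ℝ,
      ∑ i, f i = (∑ i ∈ Finset.univ.erase k, f i) + f k :=
    fun f => (Finset.sum_erase_add _ _ (Finset.mem_univ k)).symm
  set δ := α' k - α k with hδ
  set S := ∑ i ∈ Finset.univ.erase k, D i k * α i with hS
  have hSnn : 0 ≤ S :=
    Finset.sum_nonneg fun i _ => mul_nonneg (hnn i k) (hα i).le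
  -- the k-th error vanishes after the update
  have hBk : (∑ j, D k j * α' k * α' j) - 1 = 0 := by
    have h1 : ∑ j, D k j * α' k * α' j = S * α' k + D k k * α' k * α' k := by
      rw [hsum_erase (fun j => D k j * α' k * α' j), hS, Finset.sum_mul]
      congr 1
      apply Finset.sum_congr rfl
      intro j hj
      rw [hagree j (Finset.ne_of_mem_erase hj), hsym k j]
      ring
    rw [h1]
    nlinarith [hroot]
  -- the value of the old k-th error
  have hAk : (∑ j, D k j * α k * α j) - 1 = -(δ * (D k k * (α k + α' k) + S)) := by
    have h1 : ∑ j, D k j * α k * α j = S * α k + D k k * α k * α k := by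
      rw [hsum_erase (fun j => D k j * α k * α j), hS, Finset.sum_mul]
      congr 1
      apply Finset.sum_congr rfl
      intro j hj
      rw [hsym k j]
      ring
    rw [h1, hδ]
    nlinarith [hroot]
  -- bound on the errors at i ≠ k
  have hbound : ∀ i ∈ Finset.univ.erase k,
      |(∑ j, D i j * α' i * α' j) - 1| ≤
        |(∑ j, D i j * α i * α j) - 1| + D i k * α i * |δ| := by
    intro i hi
    have hik := Finset.ne_of_mem_erase hi
    have h1 : ∑ j, D i j * α' i * α' j
        = (∑ j, D i j * α i * α j) + D i k * α i * δ := by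
      have heach : ∀ j, D i j * α' i * α' j
          = D i j * α i * α j + D i j * α i * (α' j - α j) := by
        intro j; rw [hagree i hik]; ring
      rw [Finset.sum_congr rfl (fun j _ => heach j), Finset.sum_add_distrib]
      congr 1
      rw [Finset.sum_eq_single k]
      · intro j _ hjk; rw [hagree j hjk]; ring
      · intro h; exact absurd (Finset.mem_univ k) h
    have h2 : (∑ j, D i j * α' i * α' j) - 1
        = ((∑ j, D i j * α i * α j) - 1) + D i k * α i * δ := by
      rw [h1]; ring
    rw [h2]
    calc |((∑ j, D i j * α i * α j) - 1) + D i k * α i * δ|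
        ≤ |(∑ j, D i j * α i * α j) - 1| + |D i k * α i * δ| := abs_add_le _ _
      _ = |(∑ j, D i j * α i * α j) - 1| + D i k * α i * |δ| := by
          rw [abs_mul, abs_of_nonneg (mul_nonneg (hnn i k) (hα i).le)]
  have hsumbound : ∑ i ∈ Finset.univ.erase k, |(∑ j, D i j * α' i * α' j) - 1|
      ≤ (∑ i ∈ Finset.univ.erase k, |(∑ j, D i j * α i * α j) - 1|) + S * |δ| := by
    calc ∑ i ∈ Finset.univ.erase k, |(∑ j, D i j * α' i * α' j) - 1|
        ≤ ∑ i ∈ Finset.univ.erase k,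
            (|(∑ j, D i j * α i * α j) - 1| + D i k * α i * |δ|) :=
          Finset.sum_le_sum hbound
      _ = (∑ i ∈ Finset.univ.erase k, |(∑ j, D i j * α i * α j) - 1|) + S * |δ| := by
          rw [Finset.sum_add_distrib, hS, Finset.sum_mul]
  rw [hsum_erase (fun i => |(∑ j, D i j * α' i * α' j) - 1|),
      hsum_erase (fun i => |(∑ j, D i j * α i * α j) - 1|)]
  simp only [hBk, hAk, abs_zero, abs_neg, add_zero]
  have hPabs : |δ * (D k k * (α k + α' k) + S)|
      = |δ| * (D k k * (α k + α' k) + S) := by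
    rw [abs_mul, abs_of_nonneg (show (0:ℝ) ≤ D k k * (α k + α' k) + S by
      nlinarith [hα k, hpos, hSnn, hdiag k])]
  rw [hPabs]
  have habsδ : 0 ≤ |δ| := abs_nonneg δ
  nlinarith [hsumbound, mul_nonneg (mul_nonneg (hdiag k).le hpos.le) habsδ]
end
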